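/- Let n ≥ 2 and ε ≥ 0. For s ∈ {0,1}ⁿ define v_i(s) = Σ_{j≠i} s_j + ε·s_i if there exists j ≠ i with s_j = 0, and v_i(s) = n² + ε·s_i otherwise. Let x : {0,1}ⁿ → (Fin n → ℝ) satisfy: x_i(s) ≥ 0 for all i, s; Σ_i x_i(s) ≤ 1 for all s; and x_i is monotone in s_i, i.e. x_i(s with i-th coordinate 0) ≤ x_i(s with i-th coordinate 1) for all s. Then there exists an agent i such that, at the profile sⁱ (which equals 1 at every coordinate except 0 at coordinate i), Σ_j x_j(sⁱ)·v_j(sⁱ) ≤ 2n − 2 + ε, while v_i(sⁱ) = n². Consequently no ex-post IC feasible allocation achieves better than an Ω(√d)-approximation for d-SOS valuations with d = n². -/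
import Mathlib


open Finset

/-- Theorem 4.2(b) (thm:noexpost): for the single-item instance with `n` agents,
binary signals, and valuations `v_i(s) = Σ_{j≠i} s_j + ε·s_i` if some `j ≠ i`
has `s_j = 0`, and `v_i(s) = n² + ε·s_i` otherwise (these are `d`-SOS with
`d = n²`), every feasible allocation rule `x` that is monotone in each agent's
own signal has an agent `i` whose "all-ones-except-`i`" profile `sⁱ` witnesses
an expected welfare of at most `2n − 2 + ε`, while `v_i(sⁱ) = n²`.
Hence no ex-post IC mechanism beats an `Ω(√d)`-approximation for `d`-SOS
valuations. -/
theorem no_expost_sqrt_d (n : ℕ) (hn : 2 ≤ n) (ε : ℝ) (hε : 0 ≤ ε)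
    (v : Fin n → (Fin n → Bool) → ℝ)
    (hv : ∀ i s, v i s =
      if ∀ j, j ≠ i → s j = true then
        (n : ℝ) ^ 2 + ε * (if s i then 1 else 0)
      else
        (∑ j ∈ Finset.univ.erase i, (if s j then (1 : ℝ) else 0))
          + ε * (if s i then 1 else 0))
    (x : (Fin n → Bool) → Fin n → ℝ)
    (hnn : ∀ s i, 0 ≤ x s i)
    (hfeas : ∀ s, ∑ i, x s i ≤ 1)
    (hmono : ∀ s i, x (Function.update s i false) i ≤ x (Function.update s i true) i) :
    ∃ i : Fin n,
      (∑ j, x (fun l => if l = i then false else true) j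
          * v j (fun l => if l = i then false else true) ≤ 2 * (n : ℝ) - 2 + ε)
      ∧ v i (fun l => if l = i then false else true) = (n : ℝ) ^ 2 := by
  have hn0 : (0 : ℝ) < n := by positivity
  have hn2 : (2 : ℝ) ≤ (n : ℝ) := by exact_mod_cast hn
  -- find i with x ones i ≤ 1/n
  set ones : Fin n → Bool := fun _ => true with hones
  have hnpos : 0 < n := by omega
  obtain ⟨i, hi⟩ : ∃ i : Fin n, x ones i ≤ 1 / n := by
    by_contra h
    push_neg at h
    have : (1 : ℝ) < ∑ j, x ones j := by
      calc (1 : ℝ) = ∑ _j : Fin n, (1 / n : ℝ) := by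
            simp [Finset.sum_const, Finset.card_univ]
            field_simp
        _ < ∑ j, x ones j := by
            apply Finset.sum_lt_sum_of_nonempty
            · exact Finset.univ_nonempty_iff.mpr ⟨⟨0, hnpos⟩⟩
            · exact fun j _ => h j
    linarith [hfeas ones]
  refine ⟨i, ?_, ?_⟩
  · set sI : Fin n → Bool := fun l => if l = i then false else true with hsI
    have hupT : Function.update sI i true = ones := by
      funext l; by_cases h : l = i <;> simp [Function.update, sI, h, ones]
    have hupF : Function.update sI i false = sI := by
      funext l; by_cases h : l = i <;> simp [Function.update, sI, h]
    have hxi : x sI i ≤ 1 / n := by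
      have := hmono sI i
      rw [hupT, hupF] at this
      linarith
    have hvi : v i sI = (n : ℝ) ^ 2 := by
      rw [hv]
      simp [sI]
    have hvj : ∀ j, j ≠ i → v j sI = (n : ℝ) - 2 + ε := by
      intro j hj
      rw [hv]
      rw [if_neg, if_pos (by simp [sI, hj])]
      · have : ∑ k ∈ Finset.univ.erase j, (if sI k then (1 : ℝ) else 0)
            = ∑ k ∈ Finset.univ.erase j, (1 - if k = i then (1 : ℝ) else 0) := by
          apply Finset.sum_congr rfl
          intro k _
          by_cases h : k = i <;> simp [sI, h]
        rw [this, Finset.sum_sub_distrib]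
        rw [Finset.sum_const, Finset.card_erase_of_mem (Finset.mem_univ _), Finset.card_univ,
          Fintype.card_fin]
        rw [Finset.sum_ite_eq' (Finset.univ.erase j) i (fun _ => (1 : ℝ))]
        rw [if_pos (Finset.mem_erase.mpr ⟨Ne.symm hj, Finset.mem_univ _⟩)]
        have : ((n - 1 : ℕ) : ℝ) = (n : ℝ) - 1 := by
          have : (1 : ℕ) ≤ n := by omega
          push_cast [Nat.cast_sub this]; ring
        rw [nsmul_eq_mul, this]
        ring
      · push_neg
        exact ⟨i, Ne.symm hj, by simp [sI]⟩
    have hsum : ∑ j, x sI j * v j sI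
        = x sI i * (n : ℝ) ^ 2 + ∑ j ∈ Finset.univ.erase i, x sI j * ((n : ℝ) - 2 + ε) := by
      rw [← Finset.add_sum_erase _ _ (Finset.mem_univ i), hvi]
      congr 1
      exact Finset.sum_congr rfl fun j hj => by rw [hvj j (Finset.mem_erase.mp hj).1]
    have hrest : ∑ j ∈ Finset.univ.erase i, x sI j ≤ 1 := by
      have h1 : ∑ j ∈ Finset.univ.erase i, x sI j ≤ ∑ j, x sI j := by
        apply Finset.sum_le_sum_of_subset_of_nonneg (Finset.erase_subset _ _)
        intro j _ _; exact hnn _ _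
      linarith [hfeas sI]
    have hrestnn : 0 ≤ ∑ j ∈ Finset.univ.erase i, x sI j :=
      Finset.sum_nonneg fun j _ => hnn _ _
    have hc : (0 : ℝ) ≤ (n : ℝ) - 2 + ε := by linarith
    calc ∑ j, x sI j * v j sI
        = x sI i * (n : ℝ) ^ 2 + (∑ j ∈ Finset.univ.erase i, x sI j) * ((n : ℝ) - 2 + ε) := by
          rw [hsum, Finset.sum_mul]
      _ ≤ (1 / n) * (n : ℝ) ^ 2 + 1 * ((n : ℝ) - 2 + ε) := by
          gcongr
      _ = 2 * (n : ℝ) - 2 + ε := by field_simp; ring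
  · rw [hv]; simp
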